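/- Let (A,↖,↗) be a 3-L-dendriform algebra over a field K of characteristic 0. Then the vertical operation {x,y,z}^v = ↖(x,y,z) + ↗(z,x,y) − ↗(z,y,x) defines a 3-pre-Lie algebra structure on A. -/

import Mathlib

universe u v w

variable (K : Type u) [Field K] [CharZero K]

section MultilinearDefs

variable {M₁ M₂ M₃ M₄ : Type*}
  [AddCommGroup M₁] [Module K M₁] [AddCommGroup M₂] [Module K M₂]
  [AddCommGroup M₃] [Module K M₃] [AddCommGroup M₄] [Module K M₄]

/-- A map `f : M₁ → M₂ → M₃ → M₄` which is `K`-linear in each of its three arguments. -/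
def IsTrilinearMap (f : M₁ → M₂ → M₃ → M₄) : Prop :=
  (∀ (c : K) (x x' : M₁) (y : M₂) (z : M₃), f (c • x + x') y z = c • f x y z + f x' y z) ∧
  (∀ (c : K) (x : M₁) (y y' : M₂) (z : M₃), f x (c • y + y') z = c • f x y z + f x y' z) ∧
  (∀ (c : K) (x : M₁) (y : M₂) (z z' : M₃), f x y (c • z + z') = c • f x y z + f x y z')

end MultilinearDefs

section Algebras

variable {A : Type*} [AddCommGroup A] [Module K A]
variable {V : Type*} [AddCommGroup V] [Module K V]

/-- The induced 3-commutator `[x,y,z]^C = {x,y,z} + {y,z,x} + {z,x,y}` of a ternary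
operation. -/
def preC (p : A → A → A → A) : A → A → A → A :=
  fun x y z => p x y z + p y z x + p z x y

/-- A (trilinear) bracket makes `A` a 3-Lie algebra: it is skew-symmetric (alternating)
and satisfies the fundamental identity. -/
def Is3Lie (br : A → A → A → A) : Prop :=
  IsTrilinearMap K br ∧
  (∀ x y z : A, br x y z = - br y x z) ∧
  (∀ x y z : A, br x y z = - br x z y) ∧
  (∀ x1 x2 x3 x4 x5 : A,
    br x1 x2 (br x3 x4 x5)
      = br (br x1 x2 x3) x4 x5 + br x3 (br x1 x2 x4) x5 + br x3 x4 (br x1 x2 x5))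

/-- A (trilinear) operation makes `A` a 3-pre-Lie algebra: (P0), (P1), (P2). -/
def Is3PreLie (p : A → A → A → A) : Prop :=
  IsTrilinearMap K p ∧
  (∀ x y z : A, p x y z = - p y x z) ∧
  (∀ x1 x2 x3 x4 x5 : A,
    p x1 x2 (p x3 x4 x5)
      = p (preC p x1 x2 x3) x4 x5 + p x3 (preC p x1 x2 x4) x5 + p x3 x4 (p x1 x2 x5)) ∧
  (∀ x1 x2 x3 x4 x5 : A,
    p (preC p x1 x2 x3) x4 x5
      = p x1 x2 (p x3 x4 x5) + p x2 x3 (p x1 x4 x5) + p x3 x1 (p x2 x4 x5))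

/-- `ρ` is a representation of the 3-Lie algebra `(A, br)` on `V`. -/
def Is3LieRep (br : A → A → A → A) (ρ : A → A → V → V) : Prop :=
  IsTrilinearMap K ρ ∧
  (∀ (x y : A) (v : V), ρ x y v = - ρ y x v) ∧
  (∀ (x1 x2 x3 x4 : A) (v : V),
    ρ x1 x2 (ρ x3 x4 v) - ρ x3 x4 (ρ x1 x2 v)
      = ρ (br x1 x2 x3) x4 v - ρ (br x1 x2 x4) x3 v) ∧
  (∀ (x1 x2 x3 x4 : A) (v : V),
    ρ (br x1 x2 x3) x4 v
      = ρ x1 x2 (ρ x3 x4 v) + ρ x2 x3 (ρ x1 x4 v) + ρ x3 x1 (ρ x2 x4 v))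

/-- `(l, r)` is a representation of the 3-pre-Lie algebra `(A, p)` on `V`:
`l` is skew-symmetric and a representation of the sub-adjacent 3-Lie algebra,
together with conditions (rep1)-(rep4), where `μ(x,y) = l(x,y) + r(x,y) - r(y,x)`. -/
def Is3PreLieRep (p : A → A → A → A) (l r : A → A → V → V) : Prop :=
  IsTrilinearMap K l ∧ IsTrilinearMap K r ∧
  Is3LieRep K (preC p) l ∧
  (∀ (x1 x2 x3 x4 : A) (v : V),
    l x1 x2 (r x3 x4 v)
      = r x3 x4 (l x1 x2 v + r x1 x2 v - r x2 x1 v)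
        + r (preC p x1 x2 x3) x4 v + r x3 (p x1 x2 x4) v) ∧
  (∀ (x1 x2 x3 x4 : A) (v : V),
    r (preC p x1 x2 x3) x4 v
      = l x1 x2 (r x3 x4 v) + l x2 x3 (r x1 x4 v) + l x3 x1 (r x2 x4 v)) ∧
  (∀ (x1 x2 x3 x4 : A) (v : V),
    r x1 (p x2 x3 x4) v
      = r x3 x4 (l x1 x2 v + r x1 x2 v - r x2 x1 v)
        - r x2 x4 (l x1 x3 v + r x1 x3 v - r x3 x1 v) + l x2 x3 (r x1 x4 v)) ∧
  (∀ (x1 x2 x3 x4 : A) (v : V),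
    r x3 x4 (l x1 x2 v + r x1 x2 v - r x2 x1 v)
      = l x1 x2 (r x3 x4 v) - r x2 (p x1 x3 x4) v + r x1 (p x2 x3 x4) v)

/-- `T : V → A` is an `𝒪`-operator on the 3-Lie algebra `(A, br)` associated to the
representation `ρ` of `A` on `V`. -/
def IsOOperator3Lie (br : A → A → A → A) (ρ : A → A → V → V) (T : V →ₗ[K] A) : Prop :=
  ∀ u v w : V,
    br (T u) (T v) (T w) = T (ρ (T u) (T v) w + ρ (T v) (T w) u + ρ (T w) (T u) v)

/-- `T : V → A` is an `𝒪`-operator on the 3-pre-Lie algebra `(A, p)` associated to the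
representation `(l, r)` of `A` on `V`. -/
def IsOOperator3PreLie (p : A → A → A → A) (l r : A → A → V → V) (T : V →ₗ[K] A) : Prop :=
  ∀ u v w : V,
    p (T u) (T v) (T w) = T (l (T u) (T v) w - r (T u) (T w) v + r (T v) (T w) u)

/-- `R : A → A` is a Rota-Baxter operator of weight 0 on the ternary algebra `(A, br)`. -/
def IsRotaBaxter3 (br : A → A → A → A) (R : A →ₗ[K] A) : Prop :=
  ∀ x y z : A,
    br (R x) (R y) (R z) = R (br (R x) (R y) z + br (R x) y (R z) + br x (R y) (R z))

/-- The horizontal operation `{x,y,z}^h = ↖(x,y,z) + ↗(x,y,z) - ↗(y,x,z)`. -/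
def hOp (nw ne : A → A → A → A) : A → A → A → A :=
  fun x y z => nw x y z + ne x y z - ne y x z

/-- The vertical operation `{x,y,z}^v = ↖(x,y,z) + ↗(z,x,y) - ↗(z,y,x)`. -/
def vOp (nw ne : A → A → A → A) : A → A → A → A :=
  fun x y z => nw x y z + ne z x y - ne z y x

/-- The bracket `[x,y,z]^C = {x,y,z}^h + {y,z,x}^h + {z,x,y}^h`. -/
def cOp (nw ne : A → A → A → A) : A → A → A → A :=
  fun x y z => hOp nw ne x y z + hOp nw ne y z x + hOp nw ne z x y

/-- `(A, nw, ne)` (with `nw = ↖`, `ne = ↗`) is a 3-L-dendriform algebra: axioms (L0)-(L6). -/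
def Is3LDendriform (nw ne : A → A → A → A) : Prop :=
  IsTrilinearMap K nw ∧ IsTrilinearMap K ne ∧
  (∀ x1 x2 x3 : A, nw x1 x2 x3 + nw x2 x1 x3 = 0) ∧
  (∀ x1 x2 x3 x4 x5 : A,
    nw x1 x2 (nw x3 x4 x5) - nw x3 x4 (nw x1 x2 x5)
      = nw (cOp nw ne x1 x2 x3) x4 x5 - nw (cOp nw ne x1 x2 x4) x3 x5) ∧
  (∀ x1 x2 x3 x4 x5 : A,
    nw x1 x2 (ne x5 x3 x4) - ne x5 x3 (hOp nw ne x1 x2 x4)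
      = ne x5 (cOp nw ne x1 x2 x3) x4 + ne (vOp nw ne x1 x2 x5) x3 x4) ∧
  (∀ x1 x2 x3 x4 x5 : A,
    ne x5 x1 (hOp nw ne x2 x3 x4) - nw x2 x3 (ne x5 x1 x4)
      = ne (vOp nw ne x1 x2 x5) x3 x4 - ne (vOp nw ne x1 x3 x5) x2 x4) ∧
  (∀ x1 x2 x3 x4 x5 : A,
    nw (cOp nw ne x1 x2 x3) x4 x5
      = nw x1 x2 (nw x3 x4 x5) + nw x2 x3 (nw x1 x4 x5) + nw x3 x1 (nw x2 x4 x5)) ∧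
  (∀ x1 x2 x3 x4 x5 : A,
    ne x5 (cOp nw ne x1 x2 x3) x4
      = nw x1 x2 (ne x5 x3 x4) + nw x2 x3 (ne x5 x1 x4) + nw x3 x1 (ne x5 x2 x4)) ∧
  (∀ x1 x2 x3 x4 x5 : A,
    nw x1 x2 (ne x5 x3 x4) + ne x5 x1 (hOp nw ne x2 x3 x4)
      = ne x5 x2 (hOp nw ne x1 x3 x4) + ne (vOp nw ne x1 x2 x5) x3 x4)

end Algebras


section TriHelpers

variable {K' : Type u} [Field K'] {A : Type v} [AddCommGroup A] [Module K' A]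
variable {f : A → A → A → A}

theorem triZero₁ (h : IsTrilinearMap K' f) (y z : A) : f 0 y z = 0 := by
  have h0 := h.1 (1:K') 0 0 y z
  simp only [one_smul, add_zero] at h0
  exact right_eq_add.mp h0

theorem triZero₂ (h : IsTrilinearMap K' f) (x z : A) : f x 0 z = 0 := by
  have h0 := h.2.1 (1:K') x 0 0 z
  simp only [one_smul, add_zero] at h0
  exact right_eq_add.mp h0

theorem triZero₃ (h : IsTrilinearMap K' f) (x y : A) : f x y 0 = 0 := by
  have h0 := h.2.2 (1:K') x y 0 0
  simp only [one_smul, add_zero] at h0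
  exact right_eq_add.mp h0

theorem triAdd₁ (h : IsTrilinearMap K' f) (x x' y z : A) :
    f (x + x') y z = f x y z + f x' y z := by
  have h0 := h.1 (1:K') x x' y z
  simpa using h0

theorem triAdd₂ (h : IsTrilinearMap K' f) (x y y' z : A) :
    f x (y + y') z = f x y z + f x y' z := by
  have h0 := h.2.1 (1:K') x y y' z
  simpa using h0

theorem triAdd₃ (h : IsTrilinearMap K' f) (x y z z' : A) :
    f x y (z + z') = f x y z + f x y z' := by
  have h0 := h.2.2 (1:K') x y z z'
  simpa using h0

theorem triNeg₁ (h : IsTrilinearMap K' f) (x y z : A) : f (-x) y z = - f x y z := by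
  have h0 := h.1 (-1:K') x 0 y z
  simpa [triZero₁ h] using h0

theorem triNeg₂ (h : IsTrilinearMap K' f) (x y z : A) : f x (-y) z = - f x y z := by
  have h0 := h.2.1 (-1:K') x y 0 z
  simpa [triZero₂ h] using h0

theorem triNeg₃ (h : IsTrilinearMap K' f) (x y z : A) : f x y (-z) = - f x y z := by
  have h0 := h.2.2 (-1:K') x y z 0
  simpa [triZero₃ h] using h0

end TriHelpers

/-- The vertical operation `{·,·,·}^v` of a 3-L-dendriform algebra defines a
3-pre-Lie algebra structure on `A`. -/
theorem stmt10 {A : Type v} [AddCommGroup A] [Module K A]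
    (nw ne : A → A → A → A) (hden : Is3LDendriform K nw ne) :
    Is3PreLie K (vOp nw ne) := by
  obtain ⟨hnw, hne, L0, L1, L2, L3, L4, L5, L6⟩ := hden
  refine ⟨⟨?_, ?_, ?_⟩, ?_, ?_, ?_⟩
  · intro c x x' y z
    simp only [vOp]
    rw [hnw.1, hne.2.1, hne.2.2]
    module
  · intro c x y y' z
    simp only [vOp]
    rw [hnw.2.1, hne.2.2, hne.2.1]
    module
  · intro c x y z z'
    simp only [vOp]
    rw [hnw.2.2, hne.1, hne.1]
    module
  · intro x y z
    have h0 := L0 x y z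
    simp only [vOp]
    linear_combination (norm := abel) h0
  · intro x1 x2 x3 x4 x5
    have E1 := L1 x1 x2 x3 x4 x5
    have E2 := L2 x1 x2 x3 x4 x5
    have E3 := L2 x1 x2 x4 x3 x5
    have E4 := L2 x1 x3 x4 x2 x5
    have E5 := L5 x1 x3 x4 x2 x5
    have E6 := L3 x1 x4 x3 x2 x5
    have E7 := L5 x1 x4 x3 x2 x5
    have E8 := L6 x1 x4 x3 x2 x5
    have E9 := L2 x2 x3 x4 x1 x5
    have E10 := L6 x2 x3 x4 x1 x5
    have E11 := L2 x3 x1 x4 x2 x5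
    have E12 := L3 x3 x4 x1 x2 x5
    have E13 := L2 x3 x4 x2 x1 x5
    have F1 := L0 (nw x1 x2 x4) x3 x5
    have F2 := L0 (nw x2 x4 x1) x3 x5
    have F3 := L0 (nw x4 x1 x2) x3 x5
    have F4 := L0 (ne x1 x2 x4) x3 x5
    have F5 := L0 (ne x1 x4 x2) x3 x5
    have F6 := L0 (ne x2 x1 x4) x3 x5
    have F7 := L0 (ne x2 x4 x1) x3 x5
    have F8 := L0 (ne x4 x1 x2) x3 x5
    have F9 := L0 (ne x4 x2 x1) x3 x5
    simp only [preC, vOp, cOp, hOp, sub_eq_add_neg, triAdd₁ hnw, triAdd₂ hnw,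
      triAdd₃ hnw, triNeg₁ hnw, triNeg₂ hnw, triNeg₃ hnw, triAdd₁ hne,
      triAdd₂ hne, triAdd₃ hne, triNeg₁ hne, triNeg₂ hne, triNeg₃ hne]
      at E1 E2 E3 E4 E5 E6 E7 E8 E9 E10 E11 E12 E13 ⊢
    linear_combination (norm := abel) E1 + E2 - E3 + E4 + E5 + E6 - E7 - E8 - E9
      + E10 - E11 - E12 + E13 - F1 - F2 - F3 - F4 + F5 + F6 - F7 - F8 + F9
  · intro x1 x2 x3 x4 x5
    have E1 := L4 x1 x2 x3 x4 x5
    have E2 := L5 x1 x2 x3 x4 x5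
    have E3 := L2 x1 x2 x4 x3 x5
    have E4 := L3 x1 x2 x4 x3 x5
    have E5 := L2 x1 x4 x3 x2 x5
    have E6 := L2 x2 x3 x4 x1 x5
    have E7 := L3 x2 x3 x4 x1 x5
    have E8 := L2 x2 x4 x1 x3 x5
    have E9 := L2 x3 x1 x4 x2 x5
    have E10 := L3 x3 x1 x4 x2 x5
    have E11 := L2 x3 x4 x2 x1 x5
    simp only [preC, vOp, cOp, hOp, sub_eq_add_neg, triAdd₁ hnw, triAdd₂ hnw,
      triAdd₃ hnw, triNeg₁ hnw, triNeg₂ hnw, triNeg₃ hnw, triAdd₁ hne,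
      triAdd₂ hne, triAdd₃ hne, triNeg₁ hne, triNeg₂ hne, triNeg₃ hne]
      at E1 E2 E3 E4 E5 E6 E7 E8 E9 E10 E11 ⊢
    linear_combination (norm := abel) E1 + E2 + E3 - E4 - E5 + E6 - E7 - E8
      + E9 - E10 - E11
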